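/- Let Q ≥ 1 and N ≥ 1 be integers, and for each prime p ≤ Q let Ω_p ⊆ ℤ/pℤ. Suppose Δ > 0 is a constant such that the dual large sieve inequality holds: for all complex numbers β(q,a) indexed by q ≤ Q and residues a mod q with gcd(a,q)=1, we have ∑_{n≤N} |∑_{q≤Q} ∑*_{a mod q} β(q,a) e(an/q)|² ≤ Δ ∑_{q≤Q} ∑*_{a mod q} |β(q,a)|². Assume |Ω_p| < p for all p ≤ Q. Then the sifted set S = {n ≤ N : n mod p ∉ Ω_p for all primes p ≤ Q} satisfies |S| ≤ Δ/H, where H = ∑_{q≤Q, q squarefree} ∏_{p|q} |Ω_p|/(p−|Ω_p|). -/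

import Mathlib

open scoped Classical BigOperators

noncomputable def e (t : ℝ) : ℂ := Complex.exp (2 * Real.pi * Complex.I * t)

lemma e_add (s t : ℝ) : e (s + t) = e s * e t := by
  simp [e, mul_add, Complex.exp_add]

lemma e_int (k : ℤ) : e k = 1 := by
  simp only [e]
  have : (2 * Real.pi * Complex.I : ℂ) * ((k : ℝ) : ℂ) = (k : ℂ) * (2 * Real.pi * Complex.I) := by
    push_cast; ring
  rw [this, Complex.exp_int_mul_two_pi_mul_I]

lemma e_add_int (t : ℝ) (k : ℤ) : e (t + k) = e t := by
  rw [e_add, e_int, mul_one]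

lemma conj_e (t : ℝ) : (starRingEnd ℂ) (e t) = e (-t) := by
  simp only [e, ← Complex.exp_conj, map_mul, Complex.conj_I, Complex.conj_ofReal, map_ofNat]
  congr 1
  push_cast
  ring

lemma e_zero : e 0 = 1 := by simp [e]

lemma e_nat_mul (m : ℕ) (t : ℝ) : e (m * t) = e t ^ m := by
  simp only [e, ← Complex.exp_nat_mul]
  congr 1
  push_cast
  ring

lemma e_eq_one_iff (t : ℝ) : e t = 1 ↔ ∃ k : ℤ, t = k := by
  rw [e, Complex.exp_eq_one_iff]
  constructor
  · rintro ⟨n, hn⟩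
    refine ⟨n, ?_⟩
    have h2 : (2 * Real.pi * Complex.I : ℂ) ≠ 0 := by
      simp [Real.pi_ne_zero, Complex.I_ne_zero]
    have ht : (t : ℂ) = (n : ℂ) := by
      have : (2 * Real.pi * Complex.I : ℂ) * t = (2 * Real.pi * Complex.I : ℂ) * n := by
        rw [hn]; ring
      exact mul_left_cancel₀ h2 this
    exact_mod_cast ht
  · rintro ⟨k, rfl⟩
    exact ⟨k, by push_cast; ring⟩

lemma orth (p : ℕ) (hp : 0 < p) (t s : ZMod p) :
    ∑ c ∈ Finset.range p, (e ((t.val : ℝ)/p) ^ c * e (-((s.val : ℝ)/p)) ^ c)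
      = if t = s then (p : ℂ) else 0 := by
  haveI : NeZero p := ⟨hp.ne'⟩
  have hp' : (p : ℝ) ≠ 0 := by positivity
  have hz : ∀ c, e ((t.val : ℝ)/p) ^ c * e (-((s.val : ℝ)/p)) ^ c
      = e (((t.val : ℝ) - (s.val : ℝ))/p) ^ c := by
    intro c
    rw [← mul_pow, ← e_add]
    congr 1
    ring
  simp only [hz]
  set x : ℝ := ((t.val : ℝ) - (s.val : ℝ))/p with hx
  have hxp : e x ^ p = 1 := by
    rw [← e_nat_mul]
    have h1 : (p : ℝ) * x = (t.val : ℝ) - (s.val : ℝ) := by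
      rw [hx, mul_div_cancel₀ _ hp']
    rw [h1]
    have h2 : ((t.val : ℝ) - (s.val : ℝ)) = (((t.val : ℤ) - (s.val : ℤ) : ℤ) : ℝ) := by
      push_cast; ring
    rw [h2, e_int]
  by_cases hts : t = s
  · subst hts
    have : x = 0 := by rw [hx]; ring
    simp [this, e_zero]
  · rw [if_neg hts]
    have hx1 : e x ≠ 1 := by
      intro h
      rcases (e_eq_one_iff x).1 h with ⟨k, hk⟩
      rw [hx, div_eq_iff hp'] at hk
      have hdvd : ((t.val : ℤ) - (s.val : ℤ)) = k * p := by exact_mod_cast hk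
      have h1 : (t.val : ℤ) < p := by exact_mod_cast ZMod.val_lt t
      have h2 : (s.val : ℤ) < p := by exact_mod_cast ZMod.val_lt s
      have h1' : (0 : ℤ) ≤ t.val := by positivity
      have h2' : (0 : ℤ) ≤ s.val := by positivity
      have hpz : (0 : ℤ) < p := by exact_mod_cast hp
      have hk0 : k = 0 := by
        by_contra hk0
        rcases lt_or_gt_of_ne hk0 with hlt | hgt
        · have : k * p ≤ -p := by nlinarith
          linarith
        · have : (p : ℤ) ≤ k * p := by nlinarith
          linarith
      rw [hk0, zero_mul, sub_eq_zero] at hdvd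
      have : t.val = s.val := by exact_mod_cast hdvd
      exact hts (ZMod.val_injective p this)
    rw [geom_sum_eq hx1, hxp]
    simp

lemma normsq_c (z : ℂ) : ((‖z‖^2 : ℝ) : ℂ) = z * (starRingEnd ℂ) z := by
  rw [Complex.mul_conj]
  norm_cast
  rw [← Complex.sq_norm]

lemma parseval (p : ℕ) [NeZero p] (hp : 0 < p) (S : Finset ℕ) (w : ℕ → ℂ) :
    ∑ c ∈ Finset.range p, ‖∑ n ∈ S, w n * e (((c * n : ℕ) : ℝ)/p)‖^2
    = p * ∑ t : ZMod p, ‖∑ n ∈ S.filter (fun (n :ℕ) => (n : ZMod p) = t), w n‖^2 := by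
  have hp' : (p : ℝ) ≠ 0 := by positivity
  set A : ZMod p → ℂ := fun t => ∑ n ∈ S.filter (fun (n :ℕ) => (n : ZMod p) = t), w n with hA
  -- Step A : rewrite inner sum over fibers
  have hF : ∀ c, ∑ n ∈ S, w n * e (((c * n : ℕ) : ℝ)/p)
      = ∑ t : ZMod p, A t * e ((t.val : ℝ)/p) ^ c := by
    intro c
    rw [← Finset.sum_fiberwise S (fun (n :ℕ) => (n : ZMod p)) (fun n => w n * e (((c * n : ℕ) : ℝ)/p))]
    refine Finset.sum_congr rfl (fun t _ => ?_)
    rw [hA]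
    simp only
    rw [Finset.sum_mul]
    refine Finset.sum_congr rfl (fun n hn => ?_)
    have hnt : (n : ZMod p) = t := (Finset.mem_filter.1 hn).2
    have hval : t.val = n % p := by rw [← hnt, ZMod.val_natCast]
    set m := n % p with hm
    obtain ⟨d, hd⟩ : ∃ d, n = m + p * d := ⟨n / p, by rw [hm]; exact (Nat.mod_add_div n p).symm⟩
    have hcn : (c * n : ℕ) = c * m + c * d * p := by rw [hd]; ring
    have harg : ((c * n : ℕ) : ℝ)/p = ((c * m : ℕ) : ℝ)/p + ((c * d : ℕ) : ℤ) := by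
      rw [hcn]
      push_cast
      field_simp
    rw [harg, e_add_int, hval]
    have : ((c * m : ℕ) : ℝ)/p = c * (((m : ℕ) : ℝ)/p) := by push_cast; ring
    rw [this, e_nat_mul]
  -- Step B: complex computation
  have key : ∑ c ∈ Finset.range p, ((‖∑ n ∈ S, w n * e (((c * n : ℕ) : ℝ)/p)‖^2 : ℝ) : ℂ)
      = (p : ℂ) * ∑ t : ZMod p, ((‖A t‖^2 : ℝ) : ℂ) := by
    have expand : ∀ c ∈ Finset.range p,
        ((‖∑ n ∈ S, w n * e (((c * n : ℕ) : ℝ)/p)‖^2 : ℝ) : ℂ)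
        = ∑ t : ZMod p, ∑ s : ZMod p,
            (A t * (starRingEnd ℂ) (A s)) * (e ((t.val : ℝ)/p) ^ c * e (-((s.val : ℝ)/p)) ^ c) := by
      intro c _
      rw [normsq_c, hF c, map_sum, Finset.sum_mul_sum]
      refine Finset.sum_congr rfl (fun t _ => Finset.sum_congr rfl (fun s _ => ?_))
      rw [map_mul]
      have hconj : (starRingEnd ℂ) (e ((s.val : ℝ)/p) ^ c) = e (-((s.val : ℝ)/p)) ^ c := by
        rw [map_pow, conj_e]
      rw [hconj]
      ring
    rw [Finset.sum_congr rfl expand, Finset.sum_comm]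
    have swap2 : ∀ t : ZMod p, ∑ c ∈ Finset.range p, ∑ s : ZMod p,
        (A t * (starRingEnd ℂ) (A s)) * (e ((t.val : ℝ)/p) ^ c * e (-((s.val : ℝ)/p)) ^ c)
        = A t * (starRingEnd ℂ) (A t) * p := by
      intro t
      rw [Finset.sum_comm]
      have : ∀ s : ZMod p, ∑ c ∈ Finset.range p,
          (A t * (starRingEnd ℂ) (A s)) * (e ((t.val : ℝ)/p) ^ c * e (-((s.val : ℝ)/p)) ^ c)
          = (A t * (starRingEnd ℂ) (A s)) * (if t = s then (p : ℂ) else 0) := by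
        intro s
        rw [← Finset.mul_sum, orth p hp t s]
      rw [Finset.sum_congr rfl (fun s _ => this s)]
      simp only [mul_ite, mul_zero]
      rw [Finset.sum_ite_eq Finset.univ t (fun s => A t * (starRingEnd ℂ) (A s) * p)]
      simp
    rw [Finset.sum_congr rfl (fun t _ => swap2 t), Finset.mul_sum]
    refine Finset.sum_congr rfl (fun t _ => ?_)
    rw [normsq_c]
    ring
  have final := key
  push_cast at final
  exact_mod_cast key

lemma prime_step (p : ℕ) (hp : p.Prime) (Ω' : Finset (ZMod p)) (hω : Ω'.card < p)
    (S : Finset ℕ) (hS : ∀ n ∈ S, (n : ZMod p) ∉ Ω') (w : ℕ → ℂ) :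
    ((Ω'.card : ℝ) / ((p : ℝ) - Ω'.card)) * ‖∑ n ∈ S, w n‖^2
      ≤ ∑ c ∈ (Finset.range p).filter (fun c => Nat.gcd c p = 1),
          ‖∑ n ∈ S, w n * e (((c * n : ℕ) : ℝ)/p)‖^2 := by
  haveI : NeZero p := ⟨hp.pos.ne'⟩
  set A : ZMod p → ℂ := fun t => ∑ n ∈ S.filter (fun (n :ℕ) => (n : ZMod p) = t), w n with hA
  set Sig2 : ℝ := ∑ t : ZMod p, ‖A t‖^2 with hSig2
  set B : ℝ := ‖∑ n ∈ S, w n‖^2 with hB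
  have hA0 : ∀ t ∈ Ω', A t = 0 := by
    intro t ht
    rw [hA]
    refine Finset.sum_eq_zero (fun n hn => ?_)
    rcases Finset.mem_filter.1 hn with ⟨hnS, hnt⟩
    exact absurd (hnt ▸ ht) (hS n hnS)
  -- the filter is just the erase of 0
  have hfilter : (Finset.range p).filter (fun c => Nat.gcd c p = 1) = (Finset.range p).erase 0 := by
    ext c
    simp only [Finset.mem_filter, Finset.mem_erase, Finset.mem_range]
    constructor
    · rintro ⟨hc, hg⟩
      refine ⟨?_, hc⟩
      rintro rfl
      simp [Nat.gcd_zero_left] at hg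
      exact hp.one_lt.ne' hg
    · rintro ⟨h0, hc⟩
      refine ⟨hc, ?_⟩
      have : ¬ p ∣ c := fun hdvd => h0 (Nat.eq_zero_of_dvd_of_lt hdvd hc ▸ rfl)
      exact Nat.Coprime.gcd_eq_one ((Nat.coprime_comm).1 ((Nat.Prime.coprime_iff_not_dvd hp).2 this))
  -- value at c = 0
  have hF0 : ∑ n ∈ S, w n * e (((0 * n : ℕ) : ℝ)/p) = ∑ n ∈ S, w n := by
    refine Finset.sum_congr rfl (fun n _ => ?_)
    norm_num [e_zero]
  -- total sum over range p
  have htotal : ∑ c ∈ Finset.range p, ‖∑ n ∈ S, w n * e (((c * n : ℕ) : ℝ)/p)‖^2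
      = p * Sig2 := parseval p hp.pos S w
  -- split off c = 0
  have hsplit : ∑ c ∈ (Finset.range p).filter (fun c => Nat.gcd c p = 1),
      ‖∑ n ∈ S, w n * e (((c * n : ℕ) : ℝ)/p)‖^2 = p * Sig2 - B := by
    rw [hfilter]
    have h0mem : (0 : ℕ) ∈ Finset.range p := Finset.mem_range.2 hp.pos
    have := Finset.sum_erase_add (Finset.range p)
      (fun c => ‖∑ n ∈ S, w n * e (((c * n : ℕ) : ℝ)/p)‖^2) h0mem
    rw [htotal] at this
    rw [hF0] at this
    rw [hB]
    linarith [this]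
  rw [hsplit]
  -- Cauchy-Schwarz bound : B ≤ (p - ω) * Sig2
  have hfib : ∑ t : ZMod p, A t = ∑ n ∈ S, w n := Finset.sum_fiberwise S _ _
  have hvanish : ∑ t ∈ Finset.univ \ Ω', A t = ∑ t : ZMod p, A t := by
    refine Finset.sum_subset (Finset.sdiff_subset) (fun t _ ht => ?_)
    have : t ∈ Ω' := by
      by_contra h
      exact ht (Finset.mem_sdiff.2 ⟨Finset.mem_univ t, h⟩)
    exact hA0 t this
  have hcard : ((Finset.univ \ Ω').card : ℝ) = (p : ℝ) - Ω'.card := by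
    rw [Finset.card_sdiff_of_subset (Finset.subset_univ _)]
    have h1 : Ω'.card ≤ (Finset.univ : Finset (ZMod p)).card := Finset.card_le_card (Finset.subset_univ _)
    rw [Nat.cast_sub h1]
    congr 1
    rw [Finset.card_univ, ZMod.card]
  have hCS : B ≤ ((p : ℝ) - Ω'.card) * Sig2 := by
    have h1 : ‖∑ n ∈ S, w n‖ ≤ ∑ t ∈ Finset.univ \ Ω', ‖A t‖ := by
      rw [← hfib, ← hvanish]
      exact norm_sum_le _ _
    have h2 : (∑ t ∈ Finset.univ \ Ω', ‖A t‖)^2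
        ≤ ((Finset.univ \ Ω').card : ℝ) * ∑ t ∈ Finset.univ \ Ω', ‖A t‖^2 :=
      sq_sum_le_card_mul_sum_sq
    have h3 : ∑ t ∈ Finset.univ \ Ω', ‖A t‖^2 ≤ Sig2 := by
      rw [hSig2]
      refine Finset.sum_le_sum_of_subset_of_nonneg (Finset.subset_univ _) (fun t _ _ => by positivity)
    have h4 : B ≤ (∑ t ∈ Finset.univ \ Ω', ‖A t‖)^2 := by
      rw [hB]
      have hnn : (0:ℝ) ≤ ‖∑ n ∈ S, w n‖ := norm_nonneg _
      nlinarith [h1]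
    calc B ≤ (∑ t ∈ Finset.univ \ Ω', ‖A t‖)^2 := h4
      _ ≤ ((Finset.univ \ Ω').card : ℝ) * ∑ t ∈ Finset.univ \ Ω', ‖A t‖^2 := h2
      _ ≤ ((p : ℝ) - Ω'.card) * Sig2 := by
          rw [hcard]
          have hD : (0:ℝ) ≤ (p : ℝ) - Ω'.card := by
            have : (Ω'.card : ℝ) < p := by exact_mod_cast hω
            linarith
          exact mul_le_mul_of_nonneg_left h3 hD
  -- conclude
  have hD : (0:ℝ) < (p : ℝ) - Ω'.card := by
    have : (Ω'.card : ℝ) < p := by exact_mod_cast hω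
    linarith
  rw [div_mul_eq_mul_div, div_le_iff₀ hD]
  have hpB : (p : ℝ) * B ≤ (p : ℝ) * (((p : ℝ) - Ω'.card) * Sig2) :=
    mul_le_mul_of_nonneg_left hCS (by positivity)
  nlinarith [hpB]

-- cast of mod through a divisor of the modulus
lemma cast_mod_dvd (x m p : ℕ) (hdvd : p ∣ m) : ((x % m : ℕ) : ZMod p) = (x : ZMod p) := by
  conv_rhs => rw [← Nat.div_add_mod x m]
  push_cast
  rw [(ZMod.natCast_eq_zero_iff m p).2 hdvd]
  ring

lemma unitset_card (m : ℕ) :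
    ((Finset.range m).filter (fun a => Nat.gcd a m = 1)).card = Nat.totient m := by
  rw [Nat.totient_eq_card_coprime]
  congr 1
  ext a
  simp only [Finset.mem_filter, Finset.mem_range]
  rw [Nat.coprime_comm]

lemma crt_sum (p r : ℕ) (hp : 0 < p) (hr : 0 < r) (hpr : Nat.Coprime p r) (F : ℕ → ℝ) :
    ∑ a ∈ (Finset.range (p * r)).filter (fun a => Nat.gcd a (p * r) = 1), F a
    = ∑ c ∈ (Finset.range p).filter (fun c => Nat.gcd c p = 1),
        ∑ b ∈ (Finset.range r).filter (fun b => Nat.gcd b r = 1), F ((c * r + b * p) % (p * r)) := by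
  haveI : NeZero p := ⟨hp.ne'⟩
  haveI : NeZero r := ⟨hr.ne'⟩
  have hq : 0 < p * r := Nat.mul_pos hp hr
  rw [← Finset.sum_product']
  set s := ((Finset.range p).filter (fun c => Nat.gcd c p = 1)) ×ˢ
    ((Finset.range r).filter (fun b => Nat.gcd b r = 1)) with hs
  set t := (Finset.range (p * r)).filter (fun a => Nat.gcd a (p * r) = 1) with ht
  set i : ℕ × ℕ → ℕ := fun cb => (cb.1 * r + cb.2 * p) % (p * r) with hi
  -- membership
  have hmem : ∀ cb ∈ s, i cb ∈ t := by
    rintro ⟨c, b⟩ hcb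
    rw [hs, Finset.mem_product] at hcb
    obtain ⟨hc, hb⟩ := hcb
    rw [Finset.mem_filter, Finset.mem_range] at hc hb
    rw [ht, Finset.mem_filter, Finset.mem_range]
    refine ⟨Nat.mod_lt _ hq, ?_⟩
    have hcp : IsUnit ((c : ZMod p)) := (ZMod.isUnit_iff_coprime c p).2 hc.2
    have hrp : IsUnit ((r : ZMod p)) := (ZMod.isUnit_iff_coprime r p).2 hpr.symm
    have hbr : IsUnit ((b : ZMod r)) := (ZMod.isUnit_iff_coprime b r).2 hb.2
    have hpr' : IsUnit ((p : ZMod r)) := (ZMod.isUnit_iff_coprime p r).2 hpr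
    have h1 : Nat.Coprime (i (c, b)) p := by
      rw [← ZMod.isUnit_iff_coprime]
      have : ((i (c, b) : ℕ) : ZMod p) = (c : ZMod p) * (r : ZMod p) := by
        rw [hi]
        simp only
        rw [cast_mod_dvd _ _ _ ⟨r, rfl⟩]
        push_cast
        rw [ZMod.natCast_self]
        ring
      rw [this]
      exact hcp.mul hrp
    have h2 : Nat.Coprime (i (c, b)) r := by
      rw [← ZMod.isUnit_iff_coprime]
      have : ((i (c, b) : ℕ) : ZMod r) = (b : ZMod r) * (p : ZMod r) := by
        rw [hi]
        simp only
        rw [cast_mod_dvd _ _ _ ⟨p, mul_comm p r⟩]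
        push_cast
        rw [ZMod.natCast_self]
        ring
      rw [this]
      exact hbr.mul hpr'
    exact Nat.Coprime.mul_right h1 h2
  -- injectivity
  have hinj : ∀ cb₁ ∈ s, ∀ cb₂ ∈ s, i cb₁ = i cb₂ → cb₁ = cb₂ := by
    rintro ⟨c₁, b₁⟩ h₁ ⟨c₂, b₂⟩ h₂ hii
    rw [hs, Finset.mem_product, Finset.mem_filter, Finset.mem_filter,
      Finset.mem_range, Finset.mem_range] at h₁ h₂
    have hrp : IsUnit ((r : ZMod p)) := (ZMod.isUnit_iff_coprime r p).2 hpr.symm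
    have hpr' : IsUnit ((p : ZMod r)) := (ZMod.isUnit_iff_coprime p r).2 hpr
    have hcastp : ∀ c b : ℕ, ((i (c, b) : ℕ) : ZMod p) = (c : ZMod p) * (r : ZMod p) := by
      intro c b
      rw [hi]
      simp only
      rw [cast_mod_dvd _ _ _ ⟨r, rfl⟩]
      push_cast
      rw [ZMod.natCast_self]
      ring
    have hcastr : ∀ c b : ℕ, ((i (c, b) : ℕ) : ZMod r) = (b : ZMod r) * (p : ZMod r) := by
      intro c b
      rw [hi]
      simp only
      rw [cast_mod_dvd _ _ _ ⟨p, mul_comm p r⟩]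
      push_cast
      rw [ZMod.natCast_self]
      ring
    have hc : (c₁ : ZMod p) = (c₂ : ZMod p) := by
      have e1 := hcastp c₁ b₁
      have e2 := hcastp c₂ b₂
      rw [hii] at e1
      rw [e2] at e1
      exact hrp.mul_right_cancel e1.symm
    have hb : (b₁ : ZMod r) = (b₂ : ZMod r) := by
      have e1 := hcastr c₁ b₁
      have e2 := hcastr c₂ b₂
      rw [hii] at e1
      rw [e2] at e1
      exact hpr'.mul_right_cancel e1.symm
    have hc' : c₁ = c₂ := by
      have := congrArg ZMod.val hc
      rwa [ZMod.val_cast_of_lt h₁.1.1, ZMod.val_cast_of_lt h₂.1.1] at this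
    have hb' : b₁ = b₂ := by
      have := congrArg ZMod.val hb
      rwa [ZMod.val_cast_of_lt h₁.2.1, ZMod.val_cast_of_lt h₂.2.1] at this
    exact Prod.ext hc' hb'
  -- cardinality
  have hcard : t.card ≤ s.card := by
    rw [hs, ht, Finset.card_product, unitset_card, unitset_card, unitset_card,
      Nat.totient_mul hpr]
  -- surjectivity
  have hsurj : ∀ a ∈ t, ∃ cb, ∃ (h : cb ∈ s), i cb = a := by
    have := Finset.surj_on_of_inj_on_of_card_le (s := s) (t := t) (fun cb _ => i cb)
      (fun cb h => hmem cb h) (fun a₁ a₂ h₁ h₂ hh => hinj a₁ h₁ a₂ h₂ hh) hcard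
    intro a ha
    obtain ⟨cb, hcb, hI⟩ := this a ha
    exact ⟨cb, hcb, hI.symm⟩
  exact (Finset.sum_bij (fun cb _ => i cb) (fun cb h => hmem cb h)
    (fun a₁ h₁ a₂ h₂ hh => hinj a₁ h₁ a₂ h₂ hh) hsurj (fun cb _ => rfl)).symm

lemma crt_e (p r : ℕ) (hp : 0 < p) (hr : 0 < r) (c b n : ℕ) :
    e (((((c * r + b * p) % (p * r)) * n : ℕ) : ℝ) / (p * r : ℕ))
      = e (((c * n : ℕ) : ℝ) / p) * e (((b * n : ℕ) : ℝ) / r) := by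
  have hp' : (p : ℝ) ≠ 0 := by positivity
  have hr' : (r : ℝ) ≠ 0 := by positivity
  set q := p * r with hqdef
  set a := (c * r + b * p) % q with ha
  set k := (c * r + b * p) / q with hk
  have hdm : q * k + a = c * r + b * p := Nat.div_add_mod (c * r + b * p) q
  have key : (((a * n : ℕ) : ℝ) / (q : ℕ))
      = (((c * n : ℕ) : ℝ) / p + ((b * n : ℕ) : ℝ) / r) + ((-(k * n : ℕ) : ℤ) : ℝ) := by
    have hdmR : (q : ℝ) * k + a = c * r + b * p := by exact_mod_cast hdm
    have hq' : (q : ℝ) ≠ 0 := by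
      rw [hqdef]; push_cast; positivity
    push_cast
    rw [hqdef] at hq' ⊢
    push_cast at hdmR ⊢
    rw [hqdef] at hdmR
    push_cast at hdmR
    field_simp
    nlinarith [hdmR, sq_nonneg ((n:ℝ))]
  rw [key, e_add_int, e_add]

lemma montgomery (Ω : (p : ℕ) → Finset (ZMod p)) (S : Finset ℕ) :
    ∀ q : ℕ, 0 < q → Squarefree q →
      (∀ p : ℕ, p.Prime → p ∣ q → (Ω p).card < p ∧ ∀ n ∈ S, (n : ZMod p) ∉ Ω p) →
      ∀ w : ℕ → ℂ,
      (∏ p ∈ q.primeFactors, ((Ω p).card : ℝ) / ((p : ℝ) - (Ω p).card)) * ‖∑ n ∈ S, w n‖^2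
      ≤ ∑ a ∈ (Finset.range q).filter (fun a => Nat.gcd a q = 1),
          ‖∑ n ∈ S, w n * e (((a * n : ℕ) : ℝ)/q)‖^2 := by
  intro q
  induction q using Nat.strong_induction_on with
  | _ q IH =>
    intro hq hsf hcond w
    by_cases hq1 : q = 1
    · subst hq1
      have hfil : (Finset.range 1).filter (fun a => Nat.gcd a 1 = 1) = {0} := by decide
      rw [hfil, Nat.primeFactors_one, Finset.prod_empty, one_mul, Finset.sum_singleton]
      have : ∀ n : ℕ, w n * e (((0 * n : ℕ) : ℝ)/(1:ℕ)) = w n := by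
        intro n
        norm_num [e_zero]
      rw [Finset.sum_congr rfl (fun n _ => this n)]
    · set p := q.minFac with hpdef
      have hp : p.Prime := Nat.minFac_prime hq1
      have hpd : p ∣ q := Nat.minFac_dvd q
      set r := q / p with hrdef
      have hqpr : q = p * r := (Nat.mul_div_cancel' hpd).symm
      have hr : 0 < r := by
        rcases Nat.eq_zero_or_pos r with h | h
        · rw [h, mul_zero] at hqpr; omega
        · exact h
      have hrq : r < q := Nat.div_lt_self hq hp.one_lt
      have hrdvd : r ∣ q := ⟨p, by rw [hqpr]; ring⟩
      have hsfr : Squarefree r := hsf.squarefree_of_dvd hrdvd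
      have hpnr : ¬ p ∣ r := by
        rintro ⟨m, hm⟩
        have : IsUnit p := hsf p ⟨m, by rw [hqpr, hm]; ring⟩
        exact hp.one_lt.ne' (Nat.isUnit_iff.1 this)
      have hcop : Nat.Coprime p r := (hp.coprime_iff_not_dvd).2 hpnr
      have hpnotmem : p ∉ r.primeFactors := fun h => hpnr (Nat.dvd_of_mem_primeFactors h)
      have hpf : q.primeFactors = insert p r.primeFactors := by
        rw [hqpr, Nat.primeFactors_mul hp.pos.ne' hr.ne', Nat.Prime.primeFactors hp,
          ← Finset.insert_eq]
      have hprod : (∏ p' ∈ q.primeFactors, ((Ω p').card : ℝ) / ((p' : ℝ) - (Ω p').card))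
          = (((Ω p).card : ℝ) / ((p : ℝ) - (Ω p).card)) *
            ∏ p' ∈ r.primeFactors, ((Ω p').card : ℝ) / ((p' : ℝ) - (Ω p').card) := by
        rw [hpf, Finset.prod_insert hpnotmem]
      obtain ⟨hωp, hSp⟩ := hcond p hp hpd
      have hhp_nonneg : 0 ≤ ((Ω p).card : ℝ) / ((p : ℝ) - (Ω p).card) := by
        apply div_nonneg (Nat.cast_nonneg _)
        have : ((Ω p).card : ℝ) < p := by exact_mod_cast hωp
        linarith
      -- rewrite the RHS using CRT
      have hRHS : ∑ a ∈ (Finset.range q).filter (fun a => Nat.gcd a q = 1),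
            ‖∑ n ∈ S, w n * e (((a * n : ℕ) : ℝ)/q)‖^2
          = ∑ b ∈ (Finset.range r).filter (fun b => Nat.gcd b r = 1),
              ∑ c ∈ (Finset.range p).filter (fun c => Nat.gcd c p = 1),
                ‖∑ n ∈ S, (w n * e (((b * n : ℕ) : ℝ)/r)) * e (((c * n : ℕ) : ℝ)/p)‖^2 := by
        have h1 : ∑ a ∈ (Finset.range q).filter (fun a => Nat.gcd a q = 1),
              ‖∑ n ∈ S, w n * e (((a * n : ℕ) : ℝ)/q)‖^2
            = ∑ c ∈ (Finset.range p).filter (fun c => Nat.gcd c p = 1),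
                ∑ b ∈ (Finset.range r).filter (fun b => Nat.gcd b r = 1),
                  ‖∑ n ∈ S, w n * e ((((((c * r + b * p) % (p * r)) * n : ℕ)) : ℝ)/((p * r : ℕ) : ℝ))‖^2 := by
          conv_lhs => rw [hqpr]
          exact crt_sum p r hp.pos hr hcop
            (fun a => ‖∑ n ∈ S, w n * e (((a * n : ℕ) : ℝ)/((p * r : ℕ) : ℝ))‖^2)
        rw [h1, Finset.sum_comm]
        refine Finset.sum_congr rfl (fun b _ => Finset.sum_congr rfl (fun c _ => ?_))
        congr 1
        congr 1
        refine Finset.sum_congr rfl (fun n _ => ?_)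
        rw [crt_e p r hp.pos hr c b n]
        ring
      rw [hRHS, hprod]
      -- apply prime_step for each b, then IH for r
      have hstep : ∀ b, (((Ω p).card : ℝ) / ((p : ℝ) - (Ω p).card)) *
            ‖∑ n ∈ S, w n * e (((b * n : ℕ) : ℝ)/r)‖^2
          ≤ ∑ c ∈ (Finset.range p).filter (fun c => Nat.gcd c p = 1),
              ‖∑ n ∈ S, (w n * e (((b * n : ℕ) : ℝ)/r)) * e (((c * n : ℕ) : ℝ)/p)‖^2 := by
        intro b
        exact prime_step p hp (Ω p) hωp S hSp (fun n => w n * e (((b * n : ℕ) : ℝ)/r))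
      have hIH := IH r hrq hr hsfr
        (fun p' hp' hd' => hcond p' hp' (hd'.trans hrdvd)) w
      calc (((Ω p).card : ℝ) / ((p : ℝ) - (Ω p).card)) *
            (∏ p' ∈ r.primeFactors, ((Ω p').card : ℝ) / ((p' : ℝ) - (Ω p').card)) * ‖∑ n ∈ S, w n‖^2
          = (((Ω p).card : ℝ) / ((p : ℝ) - (Ω p).card)) *
            ((∏ p' ∈ r.primeFactors, ((Ω p').card : ℝ) / ((p' : ℝ) - (Ω p').card)) * ‖∑ n ∈ S, w n‖^2) := by
            ring
        _ ≤ (((Ω p).card : ℝ) / ((p : ℝ) - (Ω p).card)) *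
            ∑ b ∈ (Finset.range r).filter (fun b => Nat.gcd b r = 1),
              ‖∑ n ∈ S, w n * e (((b * n : ℕ) : ℝ)/r)‖^2 :=
            mul_le_mul_of_nonneg_left hIH hhp_nonneg
        _ = ∑ b ∈ (Finset.range r).filter (fun b => Nat.gcd b r = 1),
              (((Ω p).card : ℝ) / ((p : ℝ) - (Ω p).card)) *
                ‖∑ n ∈ S, w n * e (((b * n : ℕ) : ℝ)/r)‖^2 := Finset.mul_sum _ _ _
        _ ≤ ∑ b ∈ (Finset.range r).filter (fun b => Nat.gcd b r = 1),
              ∑ c ∈ (Finset.range p).filter (fun c => Nat.gcd c p = 1),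
                ‖∑ n ∈ S, (w n * e (((b * n : ℕ) : ℝ)/r)) * e (((c * n : ℕ) : ℝ)/p)‖^2 :=
            Finset.sum_le_sum (fun b _ => hstep b)

theorem stmt_0 (Q N : ℕ) (hQ : 1 ≤ Q) (hN : 1 ≤ N)
    (Ω : (p : ℕ) → Finset (ZMod p)) (Δ : ℝ) (hΔ : 0 < Δ)
    (hdual : ∀ β : ℕ → ℕ → ℂ,
      ∑ n ∈ Finset.Icc 1 N,
        ‖∑ q ∈ Finset.Icc 1 Q, ∑ a ∈ (Finset.range q).filter (fun a => Nat.gcd a q = 1),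
          β q a * e (((a * n : ℕ) : ℝ) / q)‖ ^ 2
      ≤ Δ * ∑ q ∈ Finset.Icc 1 Q,
          ∑ a ∈ (Finset.range q).filter (fun a => Nat.gcd a q = 1), ‖β q a‖ ^ 2)
    (hΩ : ∀ p ∈ Finset.Icc 1 Q, p.Prime → (Ω p).card < p) :
    (((Finset.Icc 1 N).filter
        (fun n => ∀ p ∈ Finset.Icc 1 Q, p.Prime → (n : ZMod p) ∉ Ω p)).card : ℝ)
      ≤ Δ / (∑ q ∈ (Finset.Icc 1 Q).filter Squarefree,
          ∏ p ∈ q.primeFactors, ((Ω p).card : ℝ) / ((p : ℝ) - (Ω p).card)) := by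
  set S : Finset ℕ := (Finset.Icc 1 N).filter
    (fun n => ∀ p ∈ Finset.Icc 1 Q, p.Prime → (n : ZMod p) ∉ Ω p) with hS
  set Z : ℝ := (S.card : ℝ) with hZ
  set H : ℝ := ∑ q ∈ (Finset.Icc 1 Q).filter Squarefree,
      ∏ p ∈ q.primeFactors, ((Ω p).card : ℝ) / ((p : ℝ) - (Ω p).card) with hH
  -- each term of H is nonnegative
  have hterm_nonneg : ∀ q ∈ (Finset.Icc 1 Q).filter Squarefree,
      0 ≤ ∏ p ∈ q.primeFactors, ((Ω p).card : ℝ) / ((p : ℝ) - (Ω p).card) := by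
    intro q hq
    rcases Finset.mem_filter.1 hq with ⟨hqI, _⟩
    rcases Finset.mem_Icc.1 hqI with ⟨hq1, hqQ⟩
    refine Finset.prod_nonneg (fun p hp => ?_)
    have hpp : p.Prime := Nat.prime_of_mem_primeFactors hp
    have hpq : p ∣ q := Nat.dvd_of_mem_primeFactors hp
    have hpQ : p ≤ Q := le_trans (Nat.le_of_dvd (by omega) hpq) hqQ
    have hcard := hΩ p (Finset.mem_Icc.2 ⟨hpp.one_lt.le, hpQ⟩) hpp
    have : ((Ω p).card : ℝ) < p := by exact_mod_cast hcard
    apply div_nonneg (by positivity)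
    linarith
  have hH1 : 1 ≤ H := by
    rw [hH]
    have h1mem : 1 ∈ (Finset.Icc 1 Q).filter Squarefree :=
      Finset.mem_filter.2 ⟨Finset.mem_Icc.2 ⟨le_refl 1, hQ⟩, squarefree_one⟩
    have := Finset.single_le_sum hterm_nonneg h1mem
    simpa [Nat.primeFactors_one] using this
  have hHpos : 0 < H := by linarith
  -- trivial case
  rcases Nat.eq_zero_or_pos S.card with hZ0 | hZpos
  · rw [hZ, hZ0]
    have := div_pos hΔ hHpos
    simp only [Nat.cast_zero]
    linarith
  have hZpos' : (0 : ℝ) < Z := by rw [hZ]; exact_mod_cast hZpos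
  -- define T and β
  set T : ℕ → ℕ → ℂ := fun q a => ∑ n ∈ S, e (((a * n : ℕ) : ℝ)/q) with hT
  set β : ℕ → ℕ → ℂ := fun q a => if Squarefree q then (starRingEnd ℂ) (T q a) else 0 with hβ
  set V : ℝ := ∑ q ∈ Finset.Icc 1 Q,
      ∑ a ∈ (Finset.range q).filter (fun a => Nat.gcd a q = 1), ‖β q a‖ ^ 2 with hV
  -- V as a sum over squarefree q of ‖T‖²
  have hVsf : V = ∑ q ∈ (Finset.Icc 1 Q).filter Squarefree,
      ∑ a ∈ (Finset.range q).filter (fun a => Nat.gcd a q = 1), ‖T q a‖ ^ 2 := by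
    rw [hV]
    conv_rhs => rw [Finset.sum_filter]
    refine Finset.sum_congr rfl (fun q _ => ?_)
    by_cases hsf : Squarefree q
    · rw [if_pos hsf]
      refine Finset.sum_congr rfl (fun a _ => ?_)
      rw [hβ]
      simp [hsf]
    · rw [if_neg hsf]
      rw [hβ]
      simp [hsf]
  -- Montgomery's lower bound : H * Z^2 ≤ V
  have hMont : H * Z^2 ≤ V := by
    rw [hVsf, hH, Finset.sum_mul]
    refine Finset.sum_le_sum (fun q hq => ?_)
    rcases Finset.mem_filter.1 hq with ⟨hqI, hsf⟩
    rcases Finset.mem_Icc.1 hqI with ⟨hq1, hqQ⟩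
    have hcond : ∀ p : ℕ, p.Prime → p ∣ q → (Ω p).card < p ∧ ∀ n ∈ S, (n : ZMod p) ∉ Ω p := by
      intro p hpp hpq
      have hpQ : p ≤ Q := le_trans (Nat.le_of_dvd (by omega) hpq) hqQ
      have hpI : p ∈ Finset.Icc 1 Q := Finset.mem_Icc.2 ⟨hpp.one_lt.le, hpQ⟩
      refine ⟨hΩ p hpI hpp, fun n hn => ?_⟩
      have hn' := hn
      simp only [hS, Finset.mem_filter] at hn'
      exact hn'.2 p hpI hpp
    have := montgomery Ω S q (by omega) hsf hcond (fun _ => (1 : ℂ))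
    have hsum1 : ‖∑ _n ∈ S, (1 : ℂ)‖^2 = Z^2 := by
      rw [Finset.sum_const, hZ]
      simp
    rw [hsum1] at this
    refine le_trans (le_of_eq (by ring)) (le_trans this (le_of_eq ?_))
    refine Finset.sum_congr rfl (fun a _ => ?_)
    rw [hT]
    simp
  -- duality : the large sieve applied to β
  set G : ℕ → ℂ := fun n => ∑ q ∈ Finset.Icc 1 Q,
      ∑ a ∈ (Finset.range q).filter (fun a => Nat.gcd a q = 1),
        β q a * e (((a * n : ℕ) : ℝ) / q) with hG
  have hdual' : ∑ n ∈ Finset.Icc 1 N, ‖G n‖ ^ 2 ≤ Δ * V := hdual β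
  -- the sum of G over S equals V
  have hsumG : ∑ n ∈ S, G n = (V : ℂ) := by
    rw [hG]
    rw [Finset.sum_comm]
    have : ∀ q ∈ Finset.Icc 1 Q, ∑ n ∈ S,
        ∑ a ∈ (Finset.range q).filter (fun a => Nat.gcd a q = 1),
          β q a * e (((a * n : ℕ) : ℝ) / q)
        = ∑ a ∈ (Finset.range q).filter (fun a => Nat.gcd a q = 1),
            ((‖β q a‖^2 : ℝ) : ℂ) := by
      intro q _
      rw [Finset.sum_comm]
      refine Finset.sum_congr rfl (fun a _ => ?_)
      rw [← Finset.mul_sum]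
      show β q a * T q a = ((‖β q a‖^2 : ℝ) : ℂ)
      rw [normsq_c, hβ]
      by_cases hsf : Squarefree q
      · simp only [hsf, if_true, Complex.conj_conj]
      · simp [hsf]
    rw [Finset.sum_congr rfl this, hV]
    norm_cast

  -- Cauchy-Schwarz + duality : V^2 ≤ Z * (Δ * V)
  have hCS : V^2 ≤ Z * ∑ n ∈ Finset.Icc 1 N, ‖G n‖ ^ 2 := by
    have hVnn : 0 ≤ V := by
      rw [hV]
      refine Finset.sum_nonneg (fun q _ => Finset.sum_nonneg (fun a _ => by positivity))
    have h1 : V = ‖∑ n ∈ S, G n‖ := by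
      rw [hsumG, Complex.norm_real, Real.norm_eq_abs]
      exact (abs_of_nonneg hVnn).symm
    have h2 : ‖∑ n ∈ S, G n‖ ≤ ∑ n ∈ S, ‖G n‖ := norm_sum_le _ _
    have h3 : (∑ n ∈ S, ‖G n‖)^2 ≤ (S.card : ℝ) * ∑ n ∈ S, ‖G n‖^2 :=
      sq_sum_le_card_mul_sum_sq
    have h4 : ∑ n ∈ S, ‖G n‖^2 ≤ ∑ n ∈ Finset.Icc 1 N, ‖G n‖^2 := by
      refine Finset.sum_le_sum_of_subset_of_nonneg (fun n hn => ?_) (fun n _ _ => by positivity)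
      have hn' := hn
      simp only [hS, Finset.mem_filter] at hn'
      exact hn'.1
    have h5 : V^2 ≤ (∑ n ∈ S, ‖G n‖)^2 := by
      rw [h1]
      have := norm_nonneg (∑ n ∈ S, G n)
      nlinarith [h2]
    calc V^2 ≤ (∑ n ∈ S, ‖G n‖)^2 := h5
      _ ≤ (S.card : ℝ) * ∑ n ∈ S, ‖G n‖^2 := h3
      _ ≤ Z * ∑ n ∈ Finset.Icc 1 N, ‖G n‖^2 := by
          rw [hZ]
          exact mul_le_mul_of_nonneg_left h4 (Nat.cast_nonneg _)
  have hVZΔ : V^2 ≤ Z * (Δ * V) :=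
    le_trans hCS (mul_le_mul_of_nonneg_left hdual' (le_of_lt hZpos'))
  -- conclude
  have hVpos : 0 < V := by nlinarith [hMont, hH1, hZpos']
  have hVle : V ≤ Z * Δ := by nlinarith [hVZΔ, hVpos]
  rw [le_div_iff₀ hHpos]
  nlinarith [hMont, hVle, hZpos']
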